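/- Let N ≥ 1 be an integer and c > 0. Then lim_{ρ→∞} −ln( (1 − 2·√(c/ρ)·K₁(2·√(c/ρ)))^N ) / ln ρ = N. -/

import Mathlib

open Filter

/-- The modified Bessel function of the second kind, via its integral representation
`K_ν(x) = ∫₀^∞ exp(−x cosh t) cosh(ν t) dt`. -/
noncomputable def besselK (ν x : ℝ) : ℝ :=
  ∫ t in Set.Ioi (0 : ℝ), Real.exp (-x * Real.cosh t) * Real.cosh (ν * t)

section Aux
open MeasureTheory Set Real

lemma tendsto_cosh_atTop' : Tendsto Real.cosh atTop atTop := by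
  apply tendsto_atTop_mono (f := fun t => Real.exp t / 2)
  · intro t
    rw [Real.cosh_eq]
    have := Real.exp_pos (-t)
    linarith
  · exact Real.tendsto_exp_atTop.atTop_div_const two_pos

lemma sinh_int (x : ℝ) (hx : 0 < x) :
    ∫ t in Set.Ioi (0:ℝ), Real.exp (-x * Real.cosh t) * Real.sinh t = Real.exp (-x) / x := by
  have hderiv : ∀ t ∈ Set.Ici (0:ℝ), HasDerivAt (fun t => -(1/x) * Real.exp (-x * Real.cosh t))
      (Real.exp (-x * Real.cosh t) * Real.sinh t) t := by
    intro t _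
    have h1 : HasDerivAt (fun t : ℝ => -x * Real.cosh t) (-x * Real.sinh t) t :=
      (Real.hasDerivAt_cosh t).const_mul (-x)
    have h2 := (h1.exp).const_mul (-(1/x))
    convert h2 using 1
    · rfl
    · rfl
    have hx0 : x ≠ 0 := hx.ne'
    field_simp
  have hpos : ∀ t ∈ Set.Ioi (0:ℝ), 0 ≤ Real.exp (-x * Real.cosh t) * Real.sinh t := by
    intro t ht
    exact mul_nonneg (Real.exp_nonneg _) (Real.sinh_nonneg_iff.mpr (le_of_lt ht))
  have htend : Tendsto (fun t => -(1/x) * Real.exp (-x * Real.cosh t)) atTop (nhds 0) := by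
    have h1 : Tendsto (fun t : ℝ => -x * Real.cosh t) atTop atBot :=
      Tendsto.const_mul_atTop_of_neg (neg_neg_iff_pos.mpr hx) tendsto_cosh_atTop'
    have := (Real.tendsto_exp_atBot.comp h1).const_mul (-(1/x))
    simpa using this
  have := MeasureTheory.integral_Ioi_of_hasDerivAt_of_nonneg' hderiv hpos htend
  rw [this]
  simp [Real.cosh_zero]
  ring

lemma sinh_integrable (x : ℝ) (hx : 0 < x) :
    IntegrableOn (fun t => Real.exp (-x * Real.cosh t) * Real.sinh t) (Set.Ioi (0:ℝ)) := by
  have hderiv : ∀ t ∈ Set.Ici (0:ℝ), HasDerivAt (fun t => -(1/x) * Real.exp (-x * Real.cosh t))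
      (Real.exp (-x * Real.cosh t) * Real.sinh t) t := by
    intro t _
    have h1 : HasDerivAt (fun t : ℝ => -x * Real.cosh t) (-x * Real.sinh t) t :=
      (Real.hasDerivAt_cosh t).const_mul (-x)
    have h2 := (h1.exp).const_mul (-(1/x))
    convert h2 using 1
    · rfl
    · rfl
    have hx0 : x ≠ 0 := hx.ne'
    field_simp
  have hpos : ∀ t ∈ Set.Ioi (0:ℝ), 0 ≤ Real.exp (-x * Real.cosh t) * Real.sinh t := by
    intro t ht
    exact mul_nonneg (Real.exp_nonneg _) (Real.sinh_nonneg_iff.mpr (le_of_lt ht))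
  have htend : Tendsto (fun t => -(1/x) * Real.exp (-x * Real.cosh t)) atTop (nhds 0) := by
    have h1 : Tendsto (fun t : ℝ => -x * Real.cosh t) atTop atBot :=
      Tendsto.const_mul_atTop_of_neg (neg_neg_iff_pos.mpr hx) tendsto_cosh_atTop'
    have := (Real.tendsto_exp_atBot.comp h1).const_mul (-(1/x))
    simpa using this
  exact MeasureTheory.integrableOn_Ioi_deriv_of_nonneg' hderiv hpos htend

lemma h_integrable (x : ℝ) (hx : 0 ≤ x) :
    IntegrableOn (fun t => Real.exp (-x * Real.cosh t) * Real.exp (-t)) (Set.Ioi (0:ℝ)) := by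
  apply Integrable.mono (exp_neg_integrableOn_Ioi 0 one_pos)
  · apply Continuous.aestronglyMeasurable
    continuity
  · filter_upwards with t
    simp only [norm_mul, Real.norm_eq_abs, Real.abs_exp]
    rw [neg_one_mul]
    have h1 : Real.exp (-x * Real.cosh t) ≤ 1 := by
      rw [Real.exp_le_one_iff]
      have := Real.one_le_cosh t
      nlinarith
    nlinarith [Real.exp_pos (-t), Real.exp_pos (-x * Real.cosh t)]

lemma besselK_decomp (x : ℝ) (hx : 0 < x) :
    x * besselK 1 x = Real.exp (-x)
      + x * ∫ t in Set.Ioi (0:ℝ), Real.exp (-x * Real.cosh t) * Real.exp (-t) := by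
  have h1 : besselK 1 x = (∫ t in Set.Ioi (0:ℝ), Real.exp (-x * Real.cosh t) * Real.sinh t)
      + ∫ t in Set.Ioi (0:ℝ), Real.exp (-x * Real.cosh t) * Real.exp (-t) := by
    rw [besselK, ← MeasureTheory.integral_add (sinh_integrable x hx) (h_integrable x hx.le)]
    apply MeasureTheory.setIntegral_congr_fun measurableSet_Ioi
    intro t _
    simp only [one_mul]
    rw [← mul_add]
    congr 1
    have := Real.cosh_sub_sinh t
    linarith
  rw [h1, sinh_int x hx]
  field_simp

lemma one_sub_exp_neg_le (y : ℝ) : 1 - Real.exp (-y) ≤ y := by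
  nlinarith [Real.add_one_le_exp (-y)]

lemma one_sub_exp_neg_ge (y : ℝ) (h0 : 0 ≤ y) (h1 : y ≤ 1) : y / 2 ≤ 1 - Real.exp (-y) := by
  have hm : Real.exp (-y) * Real.exp y = 1 := by rw [← Real.exp_add]; simp
  nlinarith [Real.add_one_le_exp y, Real.exp_pos (-y), sq_nonneg y]

lemma exp_neg_mul_cosh_le_one (x t : ℝ) (hx : 0 ≤ x) : Real.exp (-x * Real.cosh t) ≤ 1 := by
  rw [Real.exp_le_one_iff]
  nlinarith [Real.one_le_cosh t]

lemma exp_neg_cosh_le_one (t : ℝ) (ht : 0 ≤ t) : Real.exp (-t) * Real.cosh t ≤ 1 := by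
  rw [Real.cosh_eq]
  have h1 : Real.exp (-t) * Real.exp t = 1 := by rw [← Real.exp_add]; simp
  have h2 : Real.exp (-t) ≤ 1 := Real.exp_le_one_iff.mpr (by linarith)
  nlinarith [Real.exp_pos (-t)]

lemma exp_neg_cosh_ge_half (t : ℝ) : 1/2 ≤ Real.exp (-t) * Real.cosh t := by
  rw [Real.cosh_eq]
  have h1 : Real.exp (-t) * Real.exp t = 1 := by rw [← Real.exp_add]; simp
  nlinarith [Real.exp_pos (-t)]

lemma G_integrable (x : ℝ) (hx : 0 ≤ x) :
    IntegrableOn (fun t => Real.exp (-t) * (1 - Real.exp (-x * Real.cosh t))) (Set.Ioi (0:ℝ)) := by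
  have h1 : IntegrableOn (fun t : ℝ => Real.exp (-t)) (Set.Ioi (0:ℝ)) := by
    simpa using exp_neg_integrableOn_Ioi 0 one_pos
  have h2 := h_integrable x hx
  have h3 := h1.sub h2
  apply h3.congr
  filter_upwards with t
  simp only [Pi.sub_apply]
  ring

lemma G_eq (x : ℝ) (hx : 0 ≤ x) :
    (∫ t in Set.Ioi (0:ℝ), Real.exp (-t) * (1 - Real.exp (-x * Real.cosh t)))
      = 1 - ∫ t in Set.Ioi (0:ℝ), Real.exp (-x * Real.cosh t) * Real.exp (-t) := by
  have h1 : IntegrableOn (fun t : ℝ => Real.exp (-t)) (Set.Ioi (0:ℝ)) := by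
    simpa using exp_neg_integrableOn_Ioi 0 one_pos
  have h2 := h_integrable x hx
  have key : (∫ t in Set.Ioi (0:ℝ), Real.exp (-t) * (1 - Real.exp (-x * Real.cosh t)))
      = (∫ t in Set.Ioi (0:ℝ), Real.exp (-t))
        - ∫ t in Set.Ioi (0:ℝ), Real.exp (-x * Real.cosh t) * Real.exp (-t) := by
    rw [← MeasureTheory.integral_sub h1 h2]
    apply MeasureTheory.setIntegral_congr_fun measurableSet_Ioi
    intro t _
    ring
  rw [key, integral_exp_neg_Ioi_zero]

lemma cosh_le_exp' (t : ℝ) (ht : 0 ≤ t) : Real.cosh t ≤ Real.exp t := by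
  rw [Real.cosh_eq]
  have : Real.exp (-t) ≤ Real.exp t := Real.exp_le_exp.mpr (by linarith)
  linarith

lemma G_bounds (x : ℝ) (hx : 0 < x) (hx8 : x ≤ Real.exp (-8)) :
    x * (-Real.log x) / 4 ≤
        (∫ t in Set.Ioi (0:ℝ), Real.exp (-t) * (1 - Real.exp (-x * Real.cosh t)))
      ∧ (∫ t in Set.Ioi (0:ℝ), Real.exp (-t) * (1 - Real.exp (-x * Real.cosh t)))
        ≤ x * (-Real.log x) + x := by
  set T : ℝ := -Real.log x with hTdef
  have hT8 : 8 ≤ T := by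
    have := Real.log_le_log hx hx8
    rw [Real.log_exp] at this
    simp only [hTdef]
    linarith
  have hT0 : 0 < T := by linarith
  have hexpT : Real.exp (-T) = x := by
    simp only [hTdef, neg_neg]
    exact Real.exp_log hx
  have hexpT' : Real.exp T = 1 / x := by
    rw [eq_div_iff (ne_of_gt hx), ← hexpT, ← Real.exp_add]
    simp
  have hI := G_integrable x hx.le
  have hIoc : IntegrableOn (fun t => Real.exp (-t) * (1 - Real.exp (-x * Real.cosh t)))
      (Set.Ioc (0:ℝ) T) := hI.mono_set Set.Ioc_subset_Ioi_self
  have hIoiT : IntegrableOn (fun t => Real.exp (-t) * (1 - Real.exp (-x * Real.cosh t)))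
      (Set.Ioi T) := hI.mono_set (Set.Ioi_subset_Ioi hT0.le)
  have hnonneg : ∀ t : ℝ, 0 ≤ Real.exp (-t) * (1 - Real.exp (-x * Real.cosh t)) := by
    intro t
    have := exp_neg_mul_cosh_le_one x t hx.le
    nlinarith [Real.exp_pos (-t)]
  have hsplit : (∫ t in Set.Ioi (0:ℝ), Real.exp (-t) * (1 - Real.exp (-x * Real.cosh t)))
      = (∫ t in Set.Ioc (0:ℝ) T, Real.exp (-t) * (1 - Real.exp (-x * Real.cosh t)))
        + ∫ t in Set.Ioi T, Real.exp (-t) * (1 - Real.exp (-x * Real.cosh t)) := by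
    rw [← MeasureTheory.setIntegral_union Set.Ioc_disjoint_Ioi_same measurableSet_Ioi hIoc hIoiT,
      Set.Ioc_union_Ioi_eq_Ioi hT0.le]
  have hvol : (volume (Set.Ioc (0:ℝ) T)).toReal = T := by
    rw [Real.volume_Ioc, sub_zero, ENNReal.toReal_ofReal hT0.le]
  constructor
  · -- lower bound
    have h1 : (∫ t in Set.Ioc (0:ℝ) T, Real.exp (-t) * (1 - Real.exp (-x * Real.cosh t)))
        ≤ ∫ t in Set.Ioi (0:ℝ), Real.exp (-t) * (1 - Real.exp (-x * Real.cosh t)) := by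
      apply MeasureTheory.setIntegral_mono_set hI
      · filter_upwards with t using hnonneg t
      · exact HasSubset.Subset.eventuallyLE Set.Ioc_subset_Ioi_self
    have h2 : x * T / 4 ≤
        ∫ t in Set.Ioc (0:ℝ) T, Real.exp (-t) * (1 - Real.exp (-x * Real.cosh t)) := by
      have hconst : (∫ _ in Set.Ioc (0:ℝ) T, (x/4 : ℝ)) = x/4 * T := by
        rw [MeasureTheory.setIntegral_const, MeasureTheory.measureReal_def, hvol, smul_eq_mul]; ring
      calc x * T / 4 = ∫ _ in Set.Ioc (0:ℝ) T, (x/4 : ℝ) := by rw [hconst]; ring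
        _ ≤ _ := by
          apply MeasureTheory.setIntegral_mono_on
            (MeasureTheory.integrableOn_const measure_Ioc_lt_top.ne) hIoc
            measurableSet_Ioc
          intro t ht
          have ht0 : 0 < t := ht.1
          have hy0 : 0 ≤ x * Real.cosh t := by
            nlinarith [Real.one_le_cosh t]
          have hy1 : x * Real.cosh t ≤ 1 := by
            have hc : Real.cosh t ≤ Real.exp T := by
              calc Real.cosh t ≤ Real.exp t := cosh_le_exp' t ht0.le
                _ ≤ Real.exp T := Real.exp_le_exp.mpr ht.2
            rw [hexpT'] at hc
            calc x * Real.cosh t ≤ x * (1/x) := by nlinarith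
              _ = 1 := by field_simp
          have hkey := one_sub_exp_neg_ge (x * Real.cosh t) hy0 hy1
          have hhalf := exp_neg_cosh_ge_half t
          rw [neg_mul]
          have hA : Real.exp (-t) * (x * Real.cosh t / 2)
              ≤ Real.exp (-t) * (1 - Real.exp (-(x * Real.cosh t))) :=
            mul_le_mul_of_nonneg_left hkey (Real.exp_nonneg _)
          have hB : x / 4 ≤ Real.exp (-t) * (x * Real.cosh t / 2) := by
            nlinarith [mul_le_mul_of_nonneg_left hhalf hx.le]
          linarith
    linarith
  · -- upper bound
    rw [hsplit]
    have h1 : (∫ t in Set.Ioc (0:ℝ) T, Real.exp (-t) * (1 - Real.exp (-x * Real.cosh t)))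
        ≤ x * T := by
      have hconst : (∫ _ in Set.Ioc (0:ℝ) T, (x : ℝ)) = x * T := by
        rw [MeasureTheory.setIntegral_const, MeasureTheory.measureReal_def, hvol, smul_eq_mul]; ring
      rw [← hconst]
      apply MeasureTheory.setIntegral_mono_on hIoc
        (MeasureTheory.integrableOn_const measure_Ioc_lt_top.ne) measurableSet_Ioc
      intro t ht
      have hle := one_sub_exp_neg_le (x * Real.cosh t)
      have hone := exp_neg_cosh_le_one t ht.1.le
      rw [neg_mul]
      have hA : Real.exp (-t) * (1 - Real.exp (-(x * Real.cosh t)))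
          ≤ Real.exp (-t) * (x * Real.cosh t) :=
        mul_le_mul_of_nonneg_left hle (Real.exp_nonneg _)
      have hB : Real.exp (-t) * (x * Real.cosh t) ≤ x := by
        nlinarith [mul_le_mul_of_nonneg_left hone hx.le]
      linarith
    have h2 : (∫ t in Set.Ioi T, Real.exp (-t) * (1 - Real.exp (-x * Real.cosh t))) ≤ x := by
      have hint : (∫ t in Set.Ioi T, Real.exp (-t)) = x := by
        rw [integral_exp_neg_Ioi, hexpT]
      have hmono : (∫ t in Set.Ioi T, Real.exp (-t) * (1 - Real.exp (-x * Real.cosh t)))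
          ≤ ∫ t in Set.Ioi T, Real.exp (-t) := by
        apply MeasureTheory.setIntegral_mono_on hIoiT
          (by simpa using exp_neg_integrableOn_Ioi T one_pos) measurableSet_Ioi
        intro t _
        nlinarith [Real.exp_pos (-t), Real.exp_pos (-x * Real.cosh t)]
      linarith
    linarith

lemma f_bounds (x : ℝ) (hx : 0 < x) (hx8 : x ≤ Real.exp (-8)) :
    x^2 * (-Real.log x) / 8 ≤ 1 - x * besselK 1 x
      ∧ 1 - x * besselK 1 x ≤ 2 * (x^2 * (-Real.log x)) := by
  have hT8 : 8 ≤ -Real.log x := by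
    have := Real.log_le_log hx hx8
    rw [Real.log_exp] at this
    linarith
  set T : ℝ := -Real.log x with hTdef
  have hrepr : 1 - x * besselK 1 x = (1 - Real.exp (-x) - x)
      + x * ∫ t in Set.Ioi (0:ℝ), Real.exp (-t) * (1 - Real.exp (-x * Real.cosh t)) := by
    rw [besselK_decomp x hx, G_eq x hx.le]
    ring
  obtain ⟨hGl, hGu⟩ := G_bounds x hx hx8
  have hm : Real.exp (-x) * Real.exp x = 1 := by rw [← Real.exp_add]; simp
  have hA : 1 - Real.exp (-x) - x ≤ 0 := by
    nlinarith [Real.add_one_le_exp (-x)]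
  have hB : -(x^2) ≤ 1 - Real.exp (-x) - x := by
    nlinarith [Real.add_one_le_exp x, Real.exp_pos x, sq_nonneg x, sq_nonneg (1 - x)]
  constructor
  · have h1 : x * (x * T / 4) ≤
        x * ∫ t in Set.Ioi (0:ℝ), Real.exp (-t) * (1 - Real.exp (-x * Real.cosh t)) :=
      mul_le_mul_of_nonneg_left hGl hx.le
    rw [hrepr]
    nlinarith [sq_nonneg x]
  · have h1 : x * (∫ t in Set.Ioi (0:ℝ), Real.exp (-t) * (1 - Real.exp (-x * Real.cosh t)))
        ≤ x * (x * T + x) := mul_le_mul_of_nonneg_left hGu hx.le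
    rw [hrepr]
    nlinarith [sq_nonneg x]

lemma aux_tendsto (b k : ℝ) :
    Tendsto (fun u : ℝ => (u - b - Real.log ((u - b)/2) + k) / u) atTop (nhds 1) := by
  have h1 : Tendsto (fun u : ℝ => (k - b) / u) atTop (nhds 0) :=
    tendsto_const_nhds.div_atTop tendsto_id
  have hw : Tendsto (fun u : ℝ => (u - b)/2) atTop atTop :=
    (tendsto_atTop_add_const_right atTop (-b) tendsto_id).atTop_div_const two_pos
  have hcomp : Tendsto (fun u : ℝ => Real.log ((u - b)/2) / ((u - b)/2)) atTop (nhds 0) :=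
    Real.isLittleO_log_id_atTop.tendsto_div_nhds_zero.comp hw
  have hratio : Tendsto (fun u : ℝ => ((u - b)/2) / u) atTop (nhds (1/2)) := by
    have hbase : Tendsto (fun u : ℝ => (1 - b / u) / 2) atTop (nhds ((1 - 0)/2)) := by
      apply Tendsto.div_const
      exact tendsto_const_nhds.sub (tendsto_const_nhds.div_atTop tendsto_id)
    have heq : (fun u : ℝ => (1 - b / u) / 2) =ᶠ[atTop] fun u => ((u - b)/2) / u := by
      filter_upwards [eventually_gt_atTop (0:ℝ)] with u hu
      rw [div_div, div_eq_div_iff (by norm_num) (by positivity)]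
      field_simp
    rw [show (1:ℝ)/2 = (1 - 0)/2 by norm_num]
    exact Tendsto.congr' heq hbase
  have h2 : Tendsto (fun u : ℝ => Real.log ((u - b)/2) / u) atTop (nhds 0) := by
    have hprod := hcomp.mul hratio
    rw [zero_mul] at hprod
    apply Tendsto.congr' _ hprod
    filter_upwards [eventually_gt_atTop b, eventually_gt_atTop (0:ℝ)] with u hu hu0
    have hub : (0:ℝ) < u - b := by linarith
    have hw0 : (u - b)/2 ≠ 0 := by positivity
    field_simp
  have hmain := (h1.sub h2).const_add (1:ℝ)
  rw [show (1:ℝ) + (0 - 0) = 1 by norm_num] at hmain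
  apply Tendsto.congr' _ hmain
  filter_upwards [eventually_gt_atTop (0:ℝ), eventually_gt_atTop b] with u hu hub
  have hu0 : u ≠ 0 := ne_of_gt hu
  field_simp
  ring

theorem stmt_12 (N : ℕ) (hN : 1 ≤ N) (c : ℝ) (hc : 0 < c) :
    Tendsto
      (fun ρ : ℝ =>
        -Real.log ((1 - 2 * Real.sqrt (c / ρ) * besselK 1 (2 * Real.sqrt (c / ρ))) ^ N) /
          Real.log ρ)
      atTop (nhds N) := by
  set b : ℝ := Real.log (4 * c) with hbdef
  have hL : Tendsto (fun ρ : ℝ => (N:ℝ) *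
      ((Real.log ρ - b - Real.log ((Real.log ρ - b)/2) + (-Real.log 2)) / Real.log ρ))
      atTop (nhds N) := by
    have := ((aux_tendsto b (-Real.log 2)).comp Real.tendsto_log_atTop).const_mul (N:ℝ)
    simpa using this
  have hU : Tendsto (fun ρ : ℝ => (N:ℝ) *
      ((Real.log ρ - b - Real.log ((Real.log ρ - b)/2) + Real.log 8) / Real.log ρ))
      atTop (nhds N) := by
    have := ((aux_tendsto b (Real.log 8)).comp Real.tendsto_log_atTop).const_mul (N:ℝ)
    simpa using this
  have key : ∀ᶠ ρ : ℝ in atTop,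
      ((N:ℝ) * ((Real.log ρ - b - Real.log ((Real.log ρ - b)/2) + (-Real.log 2)) / Real.log ρ)
        ≤ -Real.log ((1 - 2 * Real.sqrt (c / ρ) * besselK 1 (2 * Real.sqrt (c / ρ))) ^ N) /
          Real.log ρ)
      ∧ (-Real.log ((1 - 2 * Real.sqrt (c / ρ) * besselK 1 (2 * Real.sqrt (c / ρ))) ^ N) /
          Real.log ρ
        ≤ (N:ℝ) * ((Real.log ρ - b - Real.log ((Real.log ρ - b)/2) + Real.log 8) / Real.log ρ)) := by
    filter_upwards [eventually_ge_atTop (4*c*Real.exp 16), eventually_gt_atTop (1:ℝ)]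
      with ρ hρc hρ1
    have hρ0 : (0:ℝ) < ρ := zero_lt_one.trans hρ1
    have hlogρ : 0 < Real.log ρ := Real.log_pos hρ1
    set x : ℝ := 2 * Real.sqrt (c / ρ) with hxdef
    have hcρ : 0 < c / ρ := div_pos hc hρ0
    have hx0 : 0 < x := by
      have := Real.sqrt_pos.mpr hcρ
      positivity
    have hx2 : x ^ 2 = 4 * c / ρ := by
      rw [hxdef, mul_pow, Real.sq_sqrt hcρ.le]
      ring
    have hx8 : x ≤ Real.exp (-8) := by
      have hsq : x ^ 2 ≤ Real.exp (-8) ^ 2 := by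
        have he : Real.exp (-8) ^ 2 = Real.exp (-16) := by
          rw [sq, ← Real.exp_add]; norm_num
        rw [hx2, he, div_le_iff₀ hρ0]
        have hm : Real.exp (-16) * Real.exp 16 = 1 := by rw [← Real.exp_add]; simp
        nlinarith [Real.exp_pos (-16), Real.exp_pos (16:ℝ)]
      calc x = Real.sqrt (x ^ 2) := (Real.sqrt_sq hx0.le).symm
        _ ≤ Real.sqrt (Real.exp (-8) ^ 2) := Real.sqrt_le_sqrt hsq
        _ = Real.exp (-8) := Real.sqrt_sq (Real.exp_nonneg _)
    have hlogx2 : 2 * Real.log x = b - Real.log ρ := by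
      have h1 : Real.log (x ^ 2) = Real.log (4 * c) - Real.log ρ := by
        rw [hx2, Real.log_div (by positivity) (ne_of_gt hρ0)]
      rw [Real.log_pow] at h1
      push_cast at h1
      rw [hbdef]
      linarith
    have hT8 : 8 ≤ -Real.log x := by
      have := Real.log_le_log hx0 hx8
      rw [Real.log_exp] at this
      linarith
    have hTdef' : -Real.log x = (Real.log ρ - b)/2 := by linarith
    obtain ⟨hfl, hfu⟩ := f_bounds x hx0 hx8
    set F : ℝ := 1 - x * besselK 1 x with hFdef
    have hF0 : 0 < F := by
      have h1 : 0 < x ^ 2 * (-Real.log x) := by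
        apply mul_pos (pow_pos hx0 2)
        linarith
      linarith
    have hlogFpow : -Real.log (F ^ N) = (N:ℝ) * (-Real.log F) := by
      rw [Real.log_pow]; push_cast; ring
    have hlogFu : Real.log F ≤ Real.log 2 + 2 * Real.log x + Real.log ((Real.log ρ - b)/2) := by
      have h1 := Real.log_le_log hF0 hfu
      have h2 : Real.log (2 * (x ^ 2 * (-Real.log x)))
          = Real.log 2 + 2 * Real.log x + Real.log (-Real.log x) := by
        rw [Real.log_mul (by norm_num) (by positivity), Real.log_mul (by positivity)
          (by intro h; nlinarith), Real.log_pow]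
        push_cast; ring
      rw [h2, hTdef'] at h1
      linarith
    have hlogFl : 2 * Real.log x + Real.log ((Real.log ρ - b)/2) - Real.log 8 ≤ Real.log F := by
      have h1 := Real.log_le_log (by positivity) hfl
      have h2 : Real.log (x ^ 2 * (-Real.log x) / 8)
          = 2 * Real.log x + Real.log (-Real.log x) - Real.log 8 := by
        rw [Real.log_div (by positivity) (by norm_num), Real.log_mul (by positivity)
          (by intro h; nlinarith), Real.log_pow]
        push_cast; ring
      rw [h2, hTdef'] at h1
      linarith
    constructor
    · rw [show -Real.log (F ^ N) = (N:ℝ) * (-Real.log F) from hlogFpow, mul_div_assoc]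
      gcongr
      linarith
    · rw [show -Real.log (F ^ N) = (N:ℝ) * (-Real.log F) from hlogFpow, mul_div_assoc]
      gcongr
      linarith
  exact tendsto_of_tendsto_of_tendsto_of_le_of_le' hL hU
    (key.mono fun ρ h => h.1) (key.mono fun ρ h => h.2)

end Aux
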